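/- For every pTmiss ∈ ℝ² and every choice of visible systems and hypothesized invisible masses, mT2(v₁, v₂, pTmiss, m_i⁽¹⁾, m_i⁽²⁾) ≥ m_< = max(m_v⁽¹⁾ + m_i⁽¹⁾, m_v⁽²⁾ + m_i⁽²⁾). Moreover, the infimum of mT2(v₁, v₂, pTmiss, m_i⁽¹⁾, m_i⁽²⁾) over all pTmiss ∈ ℝ² equals m_<. -/

import Mathlib

open scoped RealInnerProductSpace

/-- Transverse energy `e(m,p) = √(m² + |p|²)`. -/
noncomputable def transverseEnergy (m : ℝ) (p : EuclideanSpace ℝ (Fin 2)) : ℝ :=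
  Real.sqrt (m ^ 2 + ‖p‖ ^ 2)

/-- Transverse mass `m_T(m_v, vT, m_i, qT)`. -/
noncomputable def transverseMass (mv : ℝ) (vT : EuclideanSpace ℝ (Fin 2))
    (mi : ℝ) (qT : EuclideanSpace ℝ (Fin 2)) : ℝ :=
  Real.sqrt (mv ^ 2 + mi ^ 2 +
    2 * (transverseEnergy mv vT * transverseEnergy mi qT - ⟪vT, qT⟫))

/-- `mT2(v₁, v₂, pTmiss, m_i⁽¹⁾, m_i⁽²⁾)`: the infimum over all partitions
`qT⁽¹⁾ + qT⁽²⁾ = pTmiss` of the larger of the two transverse masses. -/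
noncomputable def mT2 (mv1 : ℝ) (vT1 : EuclideanSpace ℝ (Fin 2))
    (mv2 : ℝ) (vT2 : EuclideanSpace ℝ (Fin 2))
    (ptmiss : EuclideanSpace ℝ (Fin 2)) (mi1 mi2 : ℝ) : ℝ :=
  sInf {r : ℝ | ∃ q1 q2 : EuclideanSpace ℝ (Fin 2), q1 + q2 = ptmiss ∧
    r = max (transverseMass mv1 vT1 mi1 q1) (transverseMass mv2 vT2 mi2 q2)}

lemma tm_ge (mv mi : ℝ) (hmv : 0 ≤ mv) (hmi : 0 ≤ mi)
    (v q : EuclideanSpace ℝ (Fin 2)) :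
    mv + mi ≤ transverseMass mv v mi q := by
  have hv : (0:ℝ) ≤ ‖v‖ := norm_nonneg _
  have hq : (0:ℝ) ≤ ‖q‖ := norm_nonneg _
  have hinner : ⟪v, q⟫ ≤ ‖v‖ * ‖q‖ := real_inner_le_norm v q
  have hE : mv * mi + ‖v‖ * ‖q‖ ≤
      Real.sqrt (mv ^ 2 + ‖v‖ ^ 2) * Real.sqrt (mi ^ 2 + ‖q‖ ^ 2) := by
    rw [← Real.sqrt_mul (by positivity)]
    have h1 : mv * mi + ‖v‖ * ‖q‖ = Real.sqrt ((mv * mi + ‖v‖ * ‖q‖) ^ 2) := by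
      rw [Real.sqrt_sq (by positivity)]
    rw [h1]
    apply Real.sqrt_le_sqrt
    nlinarith [sq_nonneg (mv * ‖q‖ - mi * ‖v‖)]
  have key : (mv + mi) ^ 2 ≤ mv ^ 2 + mi ^ 2 +
      2 * (transverseEnergy mv v * transverseEnergy mi q - ⟪v, q⟫) := by
    unfold transverseEnergy
    nlinarith
  calc mv + mi = Real.sqrt ((mv + mi) ^ 2) := (Real.sqrt_sq (by positivity)).symm
    _ ≤ transverseMass mv v mi q := Real.sqrt_le_sqrt key

lemma tm_le (mv mi δ : ℝ) (hmv : 0 ≤ mv) (hmi : 0 ≤ mi) (hδ : 0 < δ)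
    (v : EuclideanSpace ℝ (Fin 2)) :
    transverseMass mv v mi ((mi / (mv + δ)) • v) ≤ mv + mi + δ := by
  set t : ℝ := mi / (mv + δ) with ht_def
  have hden : 0 < mv + δ := by linarith
  have ht : 0 ≤ t := div_nonneg hmi hden.le
  have hmi_eq : mi = t * (mv + δ) := by rw [ht_def]; field_simp [hden.ne']
  have hnorm : ‖t • v‖ = t * ‖v‖ := by
    rw [norm_smul, Real.norm_eq_abs, abs_of_nonneg ht]
  have h2 : Real.sqrt (mi ^ 2 + ‖t • v‖ ^ 2) =
      t * Real.sqrt ((mv + δ) ^ 2 + ‖v‖ ^ 2) := by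
    rw [hnorm]
    have : mi ^ 2 + (t * ‖v‖) ^ 2 = t ^ 2 * ((mv + δ) ^ 2 + ‖v‖ ^ 2) := by
      rw [hmi_eq]; ring
    rw [this, Real.sqrt_mul (by positivity), Real.sqrt_sq ht]
  have h3 : Real.sqrt (mv ^ 2 + ‖v‖ ^ 2) ≤ Real.sqrt ((mv + δ) ^ 2 + ‖v‖ ^ 2) :=
    Real.sqrt_le_sqrt (by nlinarith)
  have h4 : ⟪v, t • v⟫ = t * ‖v‖ ^ 2 := by
    rw [real_inner_smul_right, real_inner_self_eq_norm_sq]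
  have hsq : Real.sqrt ((mv + δ) ^ 2 + ‖v‖ ^ 2) * Real.sqrt ((mv + δ) ^ 2 + ‖v‖ ^ 2)
      = (mv + δ) ^ 2 + ‖v‖ ^ 2 := Real.mul_self_sqrt (by positivity)
  have hE : transverseEnergy mv v * transverseEnergy mi (t • v) ≤
      t * ((mv + δ) ^ 2 + ‖v‖ ^ 2) := by
    unfold transverseEnergy
    rw [h2]
    calc Real.sqrt (mv ^ 2 + ‖v‖ ^ 2) * (t * Real.sqrt ((mv + δ) ^ 2 + ‖v‖ ^ 2))
        ≤ Real.sqrt ((mv + δ) ^ 2 + ‖v‖ ^ 2) * (t * Real.sqrt ((mv + δ) ^ 2 + ‖v‖ ^ 2)) := by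
          apply mul_le_mul_of_nonneg_right h3 (by positivity)
      _ = t * (Real.sqrt ((mv + δ) ^ 2 + ‖v‖ ^ 2) * Real.sqrt ((mv + δ) ^ 2 + ‖v‖ ^ 2)) := by
          ring
      _ = t * ((mv + δ) ^ 2 + ‖v‖ ^ 2) := by rw [hsq]
  have key : mv ^ 2 + mi ^ 2 +
      2 * (transverseEnergy mv v * transverseEnergy mi (t • v) - ⟪v, t • v⟫)
      ≤ (mv + mi + δ) ^ 2 := by
    rw [h4]
    nlinarith [hE, hmi_eq]
  calc transverseMass mv v mi (t • v) ≤ Real.sqrt ((mv + mi + δ) ^ 2) :=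
        Real.sqrt_le_sqrt key
    _ = mv + mi + δ := Real.sqrt_sq (by positivity)

theorem mT2_ge_and_iInf_eq (mv1 mv2 mi1 mi2 : ℝ)
    (hmv1 : 0 ≤ mv1) (hmv2 : 0 ≤ mv2) (hmi1 : 0 ≤ mi1) (hmi2 : 0 ≤ mi2)
    (vT1 vT2 : EuclideanSpace ℝ (Fin 2)) :
    (∀ ptmiss : EuclideanSpace ℝ (Fin 2),
      max (mv1 + mi1) (mv2 + mi2) ≤ mT2 mv1 vT1 mv2 vT2 ptmiss mi1 mi2) ∧
    (⨅ ptmiss : EuclideanSpace ℝ (Fin 2), mT2 mv1 vT1 mv2 vT2 ptmiss mi1 mi2) =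
      max (mv1 + mi1) (mv2 + mi2) := by
  set M := max (mv1 + mi1) (mv2 + mi2) with hM
  have hge : ∀ ptmiss : EuclideanSpace ℝ (Fin 2),
      M ≤ mT2 mv1 vT1 mv2 vT2 ptmiss mi1 mi2 := by
    intro ptmiss
    apply le_csInf
    · exact ⟨max (transverseMass mv1 vT1 mi1 ptmiss) (transverseMass mv2 vT2 mi2 0),
        ptmiss, 0, add_zero _, rfl⟩
    · rintro b ⟨q1, q2, -, rfl⟩
      exact max_le_max (tm_ge mv1 mi1 hmv1 hmi1 vT1 q1) (tm_ge mv2 mi2 hmv2 hmi2 vT2 q2)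
  refine ⟨hge, le_antisymm ?_ (le_ciInf hge)⟩
  have hbdd : BddBelow (Set.range fun ptmiss => mT2 mv1 vT1 mv2 vT2 ptmiss mi1 mi2) := by
    refine ⟨M, ?_⟩
    rintro x ⟨p, rfl⟩
    exact hge p
  have hub : ∀ ε : ℝ, 0 < ε →
      (⨅ ptmiss : EuclideanSpace ℝ (Fin 2), mT2 mv1 vT1 mv2 vT2 ptmiss mi1 mi2) ≤ M + ε := by
    intro ε hε
    set q1 : EuclideanSpace ℝ (Fin 2) := (mi1 / (mv1 + ε)) • vT1
    set q2 : EuclideanSpace ℝ (Fin 2) := (mi2 / (mv2 + ε)) • vT2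
    calc (⨅ ptmiss : EuclideanSpace ℝ (Fin 2), mT2 mv1 vT1 mv2 vT2 ptmiss mi1 mi2)
        ≤ mT2 mv1 vT1 mv2 vT2 (q1 + q2) mi1 mi2 := ciInf_le hbdd _
      _ ≤ max (transverseMass mv1 vT1 mi1 q1) (transverseMass mv2 vT2 mi2 q2) := by
          apply csInf_le
          · refine ⟨M, ?_⟩
            rintro b ⟨p1, p2, -, rfl⟩
            exact max_le_max (tm_ge mv1 mi1 hmv1 hmi1 vT1 p1)
              (tm_ge mv2 mi2 hmv2 hmi2 vT2 p2)
          · exact ⟨q1, q2, rfl, rfl⟩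
      _ ≤ M + ε := by
          apply max_le
          · calc transverseMass mv1 vT1 mi1 q1 ≤ mv1 + mi1 + ε :=
                tm_le mv1 mi1 ε hmv1 hmi1 hε vT1
              _ ≤ M + ε := by linarith [le_max_left (mv1 + mi1) (mv2 + mi2)]
          · calc transverseMass mv2 vT2 mi2 q2 ≤ mv2 + mi2 + ε :=
                tm_le mv2 mi2 ε hmv2 hmi2 hε vT2
              _ ≤ M + ε := by linarith [le_max_right (mv1 + mi1) (mv2 + mi2)]
  exact le_of_forall_pos_le_add hub
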